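/- Let F be an algebraically closed field, let α₁, α₈, β₁, β₈ ∈ F, and let A₁ = (α₁, 0; 0, α₈), A₂ = (β₁, 0; 0, β₈) as split octonions. For fixed integers k₁, k₂ ≥ 2, the map (X, Y) ↦ A₁X^{k₁} + A₂Y^{k₂} is surjective on O(F) if and only if α₁β₈ ≠ 0 or α₈β₁ ≠ 0. -/

import Mathlib

/-- Zorn vector matrices: the split octonion algebra over `F`. -/
structure Oct (F : Type*) where
  a : F              -- upper-left scalar η
  b : Fin 3 → F      -- upper-right vector x
  c : Fin 3 → F      -- lower-left vector y
  d : F              -- lower-right scalar ζ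

namespace Oct

variable {F : Type*} [Field F]

/-- standard bilinear form on F^3 -/
def dot (x y : Fin 3 → F) : F := x 0 * y 0 + x 1 * y 1 + x 2 * y 2

/-- cross product on F^3, satisfying ⟨x ∧ y, z⟩ = det(x,y,z) -/
def cross (x y : Fin 3 → F) : Fin 3 → F :=
  ![x 1 * y 2 - x 2 * y 1, x 2 * y 0 - x 0 * y 2, x 0 * y 1 - x 1 * y 0]

instance : Add (Oct F) :=
  ⟨fun A B => ⟨A.a + B.a, A.b + B.b, A.c + B.c, A.d + B.d⟩⟩

instance : Mul (Oct F) :=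
  ⟨fun A B =>
    ⟨A.a * B.a + dot A.b B.c,
     A.a • B.b + B.d • A.b + cross A.c B.c,
     A.d • B.c + B.a • A.c + cross A.b B.b,
     A.d * B.d + dot A.c B.b⟩⟩

instance : SMul F (Oct F) :=
  ⟨fun t A => ⟨t * A.a, t • A.b, t • A.c, t * A.d⟩⟩

instance : One (Oct F) := ⟨⟨1, 0, 0, 1⟩⟩

/-- powers, via A^{n+1} = A · A^n (well-defined by power-associativity) -/
def pow (A : Oct F) : ℕ → Oct F
  | 0 => 1
  | n + 1 => A * pow A n

/-- octonion conjugation -/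
def conj (A : Oct F) : Oct F := ⟨A.d, -A.b, -A.c, A.a⟩

/-- the norm form -/
def norm (A : Oct F) : F := A.a * A.d - dot A.b A.c

end Oct

namespace Oct

variable {F : Type*} [Field F]

lemma mul_def' (A B : Oct F) : A * B =
    ⟨A.a * B.a + dot A.b B.c,
     A.a • B.b + B.d • A.b + cross A.c B.c,
     A.d • B.c + B.a • A.c + cross A.b B.b,
     A.d * B.d + dot A.c B.b⟩ := rfl

lemma add_def' (A B : Oct F) : A + B = ⟨A.a + B.a, A.b + B.b, A.c + B.c, A.d + B.d⟩ := rfl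

lemma one_def' : (1 : Oct F) = ⟨1, 0, 0, 1⟩ := rfl

lemma ext' {A B : Oct F} (ha : A.a = B.a) (hb : A.b = B.b) (hc : A.c = B.c)
    (hd : A.d = B.d) : A = B := by
  cases A; cases B; simp_all

lemma cross_zero_left (y : Fin 3 → F) : cross 0 y = 0 := by
  funext i; fin_cases i <;> simp [cross]

lemma cross_self_smul (t : F) (b : Fin 3 → F) : cross b (t • b) = 0 := by
  funext i; fin_cases i <;> (simp [cross]; ring)

lemma dot_zero_left (y : Fin 3 → F) : dot 0 y = 0 := by simp [dot]

lemma dot_zero_right (y : Fin 3 → F) : dot y 0 = 0 := by simp [dot]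

/-- the coefficient sequence for powers of "triangular" elements -/
def cs (s u : F) : ℕ → F
  | 0 => 0
  | n + 1 => s * cs s u n + u ^ n

lemma cs_mul (s u : F) (n : ℕ) : (s - u) * cs s u n = s ^ n - u ^ n := by
  induction n with
  | zero => simp [cs]
  | succ n ih => rw [cs]; rw [pow_succ, pow_succ]; linear_combination s * ih

lemma cs_zero_zero (n : ℕ) (hn : 2 ≤ n) : cs (0 : F) 0 n = 0 := by
  obtain ⟨m, rfl⟩ : ∃ m, n = m + 1 := ⟨n - 1, by omega⟩
  rw [cs]
  have hm : m ≠ 0 := by omega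
  simp [zero_pow hm]

lemma pow_upper (s u : F) (b : Fin 3 → F) (n : ℕ) :
    pow (⟨s, b, 0, u⟩ : Oct F) n = ⟨s ^ n, cs s u n • b, 0, u ^ n⟩ := by
  induction n with
  | zero => apply ext' <;> simp [pow, one_def', cs]
  | succ n ih =>
      rw [pow, ih, mul_def']
      apply ext'
      · show s * s ^ n + dot b 0 = s ^ (n+1)
        rw [dot_zero_right, pow_succ]; ring
      · show s • (cs s u n • b) + u ^ n • b + cross 0 (0 : Fin 3 → F) = cs s u (n+1) • b
        rw [cross_zero_left, cs, smul_smul, add_zero, ← add_smul]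
      · show u • (0 : Fin 3 → F) + s ^ n • (0 : Fin 3 → F) + cross b (cs s u n • b) = 0
        rw [cross_self_smul]; simp
      · show u * u ^ n + dot 0 (cs s u n • b) = u ^ (n+1)
        rw [dot_zero_left, pow_succ]; ring

lemma pow_lower (s u : F) (y : Fin 3 → F) (n : ℕ) :
    pow (⟨s, 0, y, u⟩ : Oct F) n = ⟨s ^ n, 0, cs u s n • y, u ^ n⟩ := by
  induction n with
  | zero => apply ext' <;> simp [pow, one_def', cs]
  | succ n ih =>
      rw [pow, ih, mul_def']
      apply ext'
      · show s * s ^ n + dot 0 (cs u s n • y) = s ^ (n+1)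
        rw [dot_zero_left, pow_succ]; ring
      · show s • (0 : Fin 3 → F) + u ^ n • (0 : Fin 3 → F) + cross y (cs u s n • y) = 0
        rw [cross_self_smul]; simp
      · show u • (cs u s n • y) + s ^ n • y + cross 0 (0 : Fin 3 → F) = cs u s (n+1) • y
        rw [cross_zero_left, cs, smul_smul, add_zero, ← add_smul]
      · show u * u ^ n + dot y 0 = u ^ (n+1)
        rw [dot_zero_right, pow_succ]; ring

lemma diag_mul (α β : F) (Z : Oct F) :
    (⟨α, 0, 0, β⟩ : Oct F) * Z = ⟨α * Z.a, α • Z.b, β • Z.c, β * Z.d⟩ := by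
  rw [mul_def']
  apply ext'
  · show α * Z.a + dot 0 Z.c = α * Z.a
    rw [dot_zero_left, add_zero]
  · show α • Z.b + Z.d • (0 : Fin 3 → F) + cross 0 Z.c = α • Z.b
    rw [cross_zero_left]; simp
  · show β • Z.c + Z.a • (0 : Fin 3 → F) + cross 0 Z.b = β • Z.c
    rw [cross_zero_left]; simp
  · show β * Z.d + dot 0 Z.b = β * Z.d
    rw [dot_zero_left, add_zero]

lemma dot_smul_right (p : F) (x y : Fin 3 → F) : dot x (p • y) = p * dot x y := by
  simp [dot]; ring

lemma pow_span (Y : Oct F) (n : ℕ) : ∃ p q : F,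
    pow Y n = ⟨p * Y.a + q, p • Y.b, p • Y.c, p * Y.d + q⟩ := by
  induction n with
  | zero => exact ⟨0, 1, by apply ext' <;> simp [pow, one_def']⟩
  | succ n ih =>
      obtain ⟨p, q, h⟩ := ih
      refine ⟨p * (Y.a + Y.d) + q, p * (dot Y.b Y.c - Y.a * Y.d), ?_⟩
      rw [pow, h, mul_def']
      apply ext'
      · show Y.a * (p * Y.a + q) + dot Y.b (p • Y.c) = _
        rw [dot_smul_right]; ring
      · show Y.a • (p • Y.b) + (p * Y.d + q) • Y.b + cross Y.c (p • Y.c) = _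
        rw [cross_self_smul, smul_smul, add_zero, ← add_smul]
        congr 1; ring
      · show Y.d • (p • Y.c) + (p * Y.a + q) • Y.c + cross Y.b (p • Y.b) = _
        rw [cross_self_smul, smul_smul, add_zero, ← add_smul]
        congr 1; ring
      · show Y.d * (p * Y.d + q) + dot Y.c (p • Y.b) = _
        rw [dot_smul_right]
        have hsym : dot Y.c Y.b = dot Y.b Y.c := by simp [dot]; ring
        rw [hsym]; ring

/-- flip is an automorphism exchanging the two "corners" -/
def flip (A : Oct F) : Oct F := ⟨A.d, A.c, A.b, A.a⟩

lemma flip_mul (A B : Oct F) : flip (A * B) = flip A * flip B := rfl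

lemma flip_add (A B : Oct F) : flip (A + B) = flip A + flip B := rfl

lemma flip_flip (A : Oct F) : flip (flip A) = A := rfl

lemma flip_pow (A : Oct F) (n : ℕ) : flip (pow A n) = pow (flip A) n := by
  induction n with
  | zero => rfl
  | succ n ih => rw [pow, pow, flip_mul, ih]

lemma exists_params (p q r s A B : F) (hp : p ≠ 0) (hs : s ≠ 0) [Infinite F] :
    ∃ a δ w v : F, p * a + q * w = A ∧ r * δ + s * v = B ∧ a ≠ δ ∧ w ≠ v := by
  classical
  obtain ⟨t, w, ht, hkey⟩ : ∃ t w : F, t ≠ 0 ∧ (p*s - r*q) * w + p*r*t ≠ p*B - r*A := by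
    by_cases he : p * s - r * q = 0
    · have hr : r ≠ 0 := by
        intro h0; rw [h0] at he
        exact mul_ne_zero hp hs (by linear_combination he)
      obtain ⟨t, ht⟩ := Infinite.exists_notMem_finset
        ({0, (p*B - r*A)/(p*r)} : Finset F)
      simp only [Finset.mem_insert, Finset.mem_singleton, not_or] at ht
      refine ⟨t, 0, ht.1, ?_⟩
      intro hcontra
      apply ht.2
      rw [eq_div_iff (mul_ne_zero hp hr)]
      linear_combination hcontra
    · refine ⟨1, (p*s - r*q)⁻¹ * (p*B - r*A - p*r) + 1, one_ne_zero, ?_⟩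
      intro hc
      apply he
      have hx : (p*s - r*q) * ((p*s - r*q)⁻¹ * (p*B - r*A - p*r)) = p*B - r*A - p*r := by
        rw [← mul_assoc, mul_inv_cancel₀ he, one_mul]
      linear_combination hc - hx
  refine ⟨(A - q*w)/p, (A - q*w)/p + t, w, (B - r*((A - q*w)/p + t))/s, ?_, ?_, ?_, ?_⟩
  · field_simp; ring
  · field_simp; ring
  · intro h
    exact ht (by simpa using h)
  · intro hw
    apply hkey
    rw [eq_div_iff hs] at hw
    field_simp at hw
    linear_combination hw

/-- a nonzero "nilpotent" of the shape `⟨0, e₀, 0, 0⟩` is never a `k`-th power, `k ≥ 2`. -/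
lemma not_pow_nilp (k : ℕ) (hk : 2 ≤ k) (Y : Oct F) :
    pow Y k ≠ ⟨0, ![1,0,0], 0, 0⟩ := by
  obtain ⟨ya, yb, yc, yd⟩ := Y
  intro h
  obtain ⟨p, q, hs⟩ := pow_span (⟨ya, yb, yc, yd⟩ : Oct F) k
  rw [h] at hs
  have h1 : (0 : F) = p * ya + q := congrArg Oct.a hs
  have h2 : ![1,0,0] = p • yb := congrArg Oct.b hs
  have h3 : (0 : Fin 3 → F) = p • yc := congrArg Oct.c hs
  have h4 : (0 : F) = p * yd + q := congrArg Oct.d hs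
  have hp : p ≠ 0 := by
    intro h0
    have h20 := congrFun h2 0
    rw [h0] at h20
    simp at h20
  have hyc : yc = 0 := by
    rcases smul_eq_zero.mp h3.symm with h0 | h0
    · exact absurd h0 hp
    · exact h0
  have hyd : yd = ya := mul_left_cancel₀ hp (by linear_combination h1 - h4)
  subst hyc
  rw [hyd] at h
  rw [pow_upper] at h
  have ha : ya ^ k = (0 : F) := congrArg Oct.a h
  have hb : cs ya ya k • yb = ![1,0,0] := congrArg Oct.b h
  have hya : ya = 0 := pow_eq_zero_iff (by omega : k ≠ 0) |>.mp ha
  subst hya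
  rw [cs_zero_zero k hk] at hb
  have h0 := congrFun hb 0
  simp at h0

lemma surj_case [IsAlgClosed F] (α₁ α₈ β₁ β₈ : F) (hα : α₁ ≠ 0) (hβ : β₈ ≠ 0)
    (k₁ k₂ : ℕ) (hk₁ : 0 < k₁) (hk₂ : 0 < k₂) (A : Oct F) :
    ∃ X Y : Oct F, A = (⟨α₁, 0, 0, α₈⟩ : Oct F) * pow X k₁
      + (⟨β₁, 0, 0, β₈⟩ : Oct F) * pow Y k₂ := by
  obtain ⟨a, δ, w, v, h1, h2, haδ, hwv⟩ := exists_params α₁ β₁ α₈ β₈ A.a A.d hα hβ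
  obtain ⟨s₁, hs₁⟩ := IsAlgClosed.exists_pow_nat_eq a hk₁
  obtain ⟨u₁, hu₁⟩ := IsAlgClosed.exists_pow_nat_eq δ hk₁
  obtain ⟨s₂, hs₂⟩ := IsAlgClosed.exists_pow_nat_eq w hk₂
  obtain ⟨u₂, hu₂⟩ := IsAlgClosed.exists_pow_nat_eq v hk₂
  have hc₁ : cs s₁ u₁ k₁ ≠ 0 := by
    intro h0
    have hm := cs_mul s₁ u₁ k₁
    rw [h0, mul_zero, hs₁, hu₁] at hm
    exact haδ (by linear_combination -hm)
  have hc₂ : cs u₂ s₂ k₂ ≠ 0 := by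
    intro h0
    have hm := cs_mul u₂ s₂ k₂
    rw [h0, mul_zero, hu₂, hs₂] at hm
    exact hwv (by linear_combination hm)
  refine ⟨⟨s₁, (α₁ * cs s₁ u₁ k₁)⁻¹ • A.b, 0, u₁⟩,
          ⟨s₂, 0, (β₈ * cs u₂ s₂ k₂)⁻¹ • A.c, u₂⟩, ?_⟩
  rw [pow_upper, pow_lower, diag_mul, diag_mul, add_def']
  apply ext'
  · show A.a = α₁ * s₁ ^ k₁ + β₁ * s₂ ^ k₂
    rw [hs₁, hs₂]; exact h1.symm
  · show A.b = α₁ • (cs s₁ u₁ k₁ • ((α₁ * cs s₁ u₁ k₁)⁻¹ • A.b)) + β₁ • (0 : Fin 3 → F)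
    rw [smul_zero, add_zero, smul_smul, smul_smul]
    have h5 : α₁ * cs s₁ u₁ k₁ * (α₁ * cs s₁ u₁ k₁)⁻¹ = 1 :=
      mul_inv_cancel₀ (mul_ne_zero hα hc₁)
    rw [h5, one_smul]
  · show A.c = α₈ • (0 : Fin 3 → F) + β₈ • (cs u₂ s₂ k₂ • ((β₈ * cs u₂ s₂ k₂)⁻¹ • A.c))
    rw [smul_zero, zero_add, smul_smul, smul_smul]
    have h5 : β₈ * cs u₂ s₂ k₂ * (β₈ * cs u₂ s₂ k₂)⁻¹ = 1 :=
      mul_inv_cancel₀ (mul_ne_zero hβ hc₂)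
    rw [h5, one_smul]
  · show A.d = α₈ * u₁ ^ k₁ + β₈ * u₂ ^ k₂
    rw [hu₁, hu₂]; exact h2.symm

end Oct

open Oct
theorem stmt_7 {F : Type*} [Field F] [IsAlgClosed F] (α₁ α₈ β₁ β₈ : F)
    (k₁ k₂ : ℕ) (hk₁ : 2 ≤ k₁) (hk₂ : 2 ≤ k₂) :
    (∀ A : Oct F, ∃ X Y : Oct F,
        A = (⟨α₁, 0, 0, α₈⟩ : Oct F) * pow X k₁ + (⟨β₁, 0, 0, β₈⟩ : Oct F) * pow Y k₂)
      ↔ (α₁ * β₈ ≠ 0 ∨ α₈ * β₁ ≠ 0) := by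
  constructor
  · intro hsurj
    by_contra hcon
    rw [not_or, not_not, not_not] at hcon
    obtain ⟨h18, h81⟩ := hcon
    rcases mul_eq_zero.mp h18 with hA1 | hB8 <;> rcases mul_eq_zero.mp h81 with hA8 | hB1
    · -- α₁ = 0, α₈ = 0
      by_cases hb1 : β₁ = 0
      · obtain ⟨X, Y, h⟩ := hsurj ⟨1, 0, 0, 0⟩
        rw [diag_mul, diag_mul, add_def'] at h
        have ha := congrArg Oct.a h
        rw [hA1, hb1] at ha
        simp at ha
      · by_cases hb8 : β₈ = 0
        · obtain ⟨X, Y, h⟩ := hsurj ⟨0, 0, 0, 1⟩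
          rw [diag_mul, diag_mul, add_def'] at h
          have hd := congrArg Oct.d h
          rw [hA8, hb8] at hd
          simp at hd
        · obtain ⟨X, Y, h⟩ := hsurj ⟨0, β₁ • ![1,0,0], 0, 0⟩
          rw [diag_mul, diag_mul, add_def'] at h
          apply not_pow_nilp k₂ hk₂ Y
          have ha := congrArg Oct.a h
          have hb := congrArg Oct.b h
          have hc := congrArg Oct.c h
          have hd := congrArg Oct.d h
          rw [hA1, hA8] at ha hb hc hd
          simp only [zero_mul, zero_add, zero_smul] at ha hb hc hd
          apply ext'
          · exact mul_left_cancel₀ hb1 (by linear_combination -ha)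
          · have := smul_right_injective (Fin 3 → F) hb1 hb
            exact this.symm
          · rcases smul_eq_zero.mp hc.symm with h0 | h0
            · exact absurd h0 hb8
            · rw [h0]
          · exact mul_left_cancel₀ hb8 (by linear_combination -hd)
    · -- α₁ = 0, β₁ = 0
      obtain ⟨X, Y, h⟩ := hsurj ⟨1, 0, 0, 0⟩
      rw [diag_mul, diag_mul, add_def'] at h
      have ha := congrArg Oct.a h
      rw [hA1, hB1] at ha
      simp at ha
    · -- β₈ = 0, α₈ = 0
      obtain ⟨X, Y, h⟩ := hsurj ⟨0, 0, 0, 1⟩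
      rw [diag_mul, diag_mul, add_def'] at h
      have hd := congrArg Oct.d h
      rw [hA8, hB8] at hd
      simp at hd
    · -- β₁ = 0, β₈ = 0
      by_cases ha1 : α₁ = 0
      · obtain ⟨X, Y, h⟩ := hsurj ⟨1, 0, 0, 0⟩
        rw [diag_mul, diag_mul, add_def'] at h
        have ha := congrArg Oct.a h
        rw [ha1, hB1] at ha
        simp at ha
      · by_cases ha8 : α₈ = 0
        · obtain ⟨X, Y, h⟩ := hsurj ⟨0, 0, 0, 1⟩
          rw [diag_mul, diag_mul, add_def'] at h
          have hd := congrArg Oct.d h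
          rw [ha8, hB8] at hd
          simp at hd
        · obtain ⟨X, Y, h⟩ := hsurj ⟨0, α₁ • ![1,0,0], 0, 0⟩
          rw [diag_mul, diag_mul, add_def'] at h
          apply not_pow_nilp k₁ hk₁ X
          have ha := congrArg Oct.a h
          have hb := congrArg Oct.b h
          have hc := congrArg Oct.c h
          have hd := congrArg Oct.d h
          rw [hB1, hB8] at ha hb hc hd
          simp only [zero_mul, add_zero, zero_smul, smul_zero] at ha hb hc hd
          apply ext'
          · exact mul_left_cancel₀ ha1 (by linear_combination -ha)
          · have := smul_right_injective (Fin 3 → F) ha1 hb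
            exact this.symm
          · rcases smul_eq_zero.mp hc.symm with h0 | h0
            · exact absurd h0 ha8
            · rw [h0]
          · exact mul_left_cancel₀ ha8 (by linear_combination -hd)
  · intro hcond A
    rcases hcond with h | h
    · exact surj_case α₁ α₈ β₁ β₈ (left_ne_zero_of_mul h) (right_ne_zero_of_mul h)
        k₁ k₂ (by omega) (by omega) A
    · obtain ⟨X, Y, hXY⟩ := surj_case α₈ α₁ β₈ β₁ (left_ne_zero_of_mul h)
        (right_ne_zero_of_mul h) k₁ k₂ (by omega) (by omega) (flip A)
      refine ⟨Oct.flip X, Oct.flip Y, ?_⟩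
      have hfl := congrArg Oct.flip hXY
      rw [Oct.flip_flip, Oct.flip_add, Oct.flip_mul, Oct.flip_mul, Oct.flip_pow, Oct.flip_pow] at hfl
      exact hfl
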